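/- Let v ∈ BL([0,1]) with stopped flow Φ and hitting time τ_∂, and fix T > 0. For z ∈ {0,1}, define Ω_z^T := { y ∈ [0,1] : τ_∂(y) < T and Φ_{τ_∂(y)}(y) = z }. Then Ω_0^T and Ω_1^T are connected subsets of [0,1], and they are disjoint. -/

import Mathlib

open MeasureTheory Set Filter
open scoped ENNReal NNReal Topology

noncomputable section

abbrev I01 : Type := Set.Icc (0:ℝ) 1

noncomputable def tvNorm (μ : SignedMeasure I01) : ℝ :=
  (μ.totalVariation Set.univ).toReal

noncomputable def supNorm (φ : I01 → ℝ) : ℝ := ⨆ x : I01, |φ x|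

noncomputable def lipConst (φ : I01 → ℝ) : ℝ :=
  sInf {K : ℝ | 0 ≤ K ∧ ∀ x y : I01, |φ x - φ y| ≤ K * dist x y}

noncomputable def blNorm (φ : I01 → ℝ) : ℝ := supNorm φ + lipConst φ

noncomputable def pairSM (μ : SignedMeasure I01) (φ : I01 → ℝ) : ℝ :=
  ∫ x, φ x ∂μ.toJordanDecomposition.posPart - ∫ x, φ x ∂μ.toJordanDecomposition.negPart

noncomputable def dualBLNorm (μ : SignedMeasure I01) : ℝ :=
  sSup {r : ℝ | ∃ φ : I01 → ℝ, Continuous φ ∧ blNorm φ ≤ 1 ∧ r = |pairSM μ φ|}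

noncomputable def Ff (f : I01 → ℝ) (μ : SignedMeasure I01) : SignedMeasure I01 :=
  μ.toJordanDecomposition.posPart.withDensityᵥ f -
    μ.toJordanDecomposition.negPart.withDensityᵥ f

/-- The stopped flow on `[0,1]` generated by a velocity field `v`: trajectories solve
`ẋ = v(x)` up to the boundary-hitting time `τ` and are frozen afterwards at the boundary
point reached; `τ` is maximal (the trajectory is stopped only where `v` pushes it
strictly out of `[0,1]`). -/
structure StoppedFlow where
  v : I01 → ℝ
  Φ : ℝ → I01 → I01
  τ : I01 → ℝ≥0∞
  init : ∀ y, Φ 0 y = y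
  ode : ∀ y, ∀ t : ℝ, 0 ≤ t → ENNReal.ofReal t < τ y →
      HasDerivAt (fun s => (Φ s y : ℝ)) (v (Φ t y)) t
  stopped : ∀ y, ∀ t : ℝ, τ y ≤ ENNReal.ofReal t →
      (Φ t y : ℝ) = 0 ∨ (Φ t y : ℝ) = 1
  frozen : ∀ y, ∀ s t : ℝ, τ y ≤ ENNReal.ofReal s → s ≤ t → Φ t y = Φ s y
  maximal : ∀ y, τ y ≠ ⊤ →
      (((Φ (τ y).toReal y : ℝ) = 0 ∧ v (Φ (τ y).toReal y) < 0) ∨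
       ((Φ (τ y).toReal y : ℝ) = 1 ∧ 0 < v (Φ (τ y).toReal y)))
  cont_t : ∀ y, Continuous fun t => Φ t y
  cont_y : ∀ t : ℝ, 0 ≤ t → Continuous fun y => Φ t y

namespace StoppedFlowAux

/-- Lipschitz extension of the velocity field to all of `ℝ`. -/
noncomputable def V (F : StoppedFlow) : ℝ → ℝ :=
  fun x => F.v (Set.projIcc 0 1 zero_le_one x)

lemma V_lip (F : StoppedFlow) {K : ℝ≥0} (hv : LipschitzWith K F.v) :
    LipschitzWith K (V F) := by
  have := hv.comp (LipschitzWith.projIcc (a := (0:ℝ)) (b := 1) zero_le_one)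
  rw [mul_one] at this
  exact this

lemma V_coe (F : StoppedFlow) (x : I01) : V F (x : ℝ) = F.v x := by
  unfold V; rw [Set.projIcc_val]

lemma keymax (F : StoppedFlow) (y : I01) (u : ℝ) (hu : 0 ≤ u)
    (hlt : ENNReal.ofReal u < F.τ y) (h1 : (F.Φ u y : ℝ) = 1) :
    ¬ (0 < F.v (F.Φ u y)) := by
  intro hpos
  have hd := F.ode y u hu hlt
  have hmax : IsLocalMax (fun s => (F.Φ s y : ℝ)) u :=
    Filter.Eventually.of_forall (fun w => by
      simp only []; rw [h1]; exact (F.Φ w y).2.2)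
  have := hmax.hasDerivAt_eq_zero hd
  linarith

lemma keymin (F : StoppedFlow) (y : I01) (u : ℝ) (hu : 0 ≤ u)
    (hlt : ENNReal.ofReal u < F.τ y) (h0 : (F.Φ u y : ℝ) = 0) :
    ¬ (F.v (F.Φ u y) < 0) := by
  intro hneg
  have hd := F.ode y u hu hlt
  have hmin : IsLocalMin (fun s => (F.Φ s y : ℝ)) u :=
    Filter.Eventually.of_forall (fun w => by
      simp only []; rw [h0]; exact (F.Φ w y).2.1)
  have := hmin.hasDerivAt_eq_zero hd
  linarith

lemma frozen_toReal (F : StoppedFlow) (y : I01) (u : ℝ) (hu : 0 ≤ u)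
    (h : F.τ y ≤ ENNReal.ofReal u) :
    F.Φ u y = F.Φ (F.τ y).toReal y := by
  have hne : F.τ y ≠ ⊤ := ne_top_of_le_ne_top ENNReal.ofReal_ne_top h
  exact F.frozen y (F.τ y).toReal u (by rw [ENNReal.ofReal_toReal hne])
    (ENNReal.toReal_le_of_le_ofReal hu h)

/-- The stopped flow is order-preserving. -/
lemma flow_mono (F : StoppedFlow) {K : ℝ≥0} (hv : LipschitzWith K F.v)
    {t : ℝ} (ht : 0 ≤ t) {y1 y2 : I01} (h12 : y1 ≤ y2) :
    (F.Φ t y1 : ℝ) ≤ (F.Φ t y2 : ℝ) := by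
  by_contra hcon
  push_neg at hcon
  set f1 : ℝ → ℝ := fun u => (F.Φ u y1 : ℝ) with hf1def
  set f2 : ℝ → ℝ := fun u => (F.Φ u y2 : ℝ) with hf2def
  have c1 : Continuous f1 := continuous_subtype_val.comp (F.cont_t y1)
  have c2 : Continuous f2 := continuous_subtype_val.comp (F.cont_t y2)
  set S : Set ℝ := Set.Icc 0 t ∩ {u | f1 u ≤ f2 u} with hSdef
  have hS0 : (0:ℝ) ∈ S := by
    refine ⟨⟨le_refl 0, ht⟩, ?_⟩
    show f1 0 ≤ f2 0
    simp only [hf1def, hf2def, F.init]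
    exact h12
  have hSbdd : BddAbove S := ⟨t, fun u hu => hu.1.2⟩
  have hSclosed : IsClosed S := isClosed_Icc.inter (isClosed_le c1 c2)
  set s := sSup S with hsdef
  have hsS : s ∈ S := hSclosed.csSup_mem ⟨0, hS0⟩ hSbdd
  have hs0 : 0 ≤ s := hsS.1.1
  have hst : s ≤ t := hsS.1.2
  have hnot : ∀ u, s < u → u ≤ t → f2 u < f1 u := by
    intro u hsu hut
    by_contra h'
    push_neg at h'
    exact absurd (le_csSup hSbdd ⟨⟨le_trans hs0 hsu.le, hut⟩, h'⟩) (not_le.mpr hsu)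
  have hst' : s < t := by
    rcases lt_or_eq_of_le hst with h | h
    · exact h
    · exact absurd hsS.2 (by rw [h]; exact not_le.mpr hcon)
  have heq : f1 s = f2 s := by
    refine le_antisymm hsS.2 ?_
    have h1 : Filter.Tendsto f1 (𝓝[>] s) (𝓝 (f1 s)) :=
      (c1.tendsto s).mono_left nhdsWithin_le_nhds
    have h2 : Filter.Tendsto f2 (𝓝[>] s) (𝓝 (f2 s)) :=
      (c2.tendsto s).mono_left nhdsWithin_le_nhds
    refine le_of_tendsto_of_tendsto h2 h1 ?_
    filter_upwards [Ioc_mem_nhdsGT_of_mem ⟨le_refl s, hst'⟩] with u hu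
    exact (hnot u hu.1 hu.2).le
  have hsub : F.Φ s y1 = F.Φ s y2 := Subtype.ext heq
  by_cases hτ1 : F.τ y1 ≤ ENNReal.ofReal s
  · -- y1 frozen at time s
    have hne1 : F.τ y1 ≠ ⊤ := ne_top_of_le_ne_top ENNReal.ofReal_ne_top hτ1
    have hfr1 : F.Φ s y1 = F.Φ (F.τ y1).toReal y1 := frozen_toReal F y1 s hs0 hτ1
    rcases F.maximal y1 hne1 with ⟨h0, hvneg⟩ | ⟨h1, hvpos⟩
    · -- frozen at 0
      have hft : F.Φ t y1 = F.Φ s y1 := F.frozen y1 s t hτ1 hst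
      have : f1 t = 0 := by
        show (F.Φ t y1 : ℝ) = 0
        rw [hft, hfr1]; exact h0
      have h2t : (0:ℝ) ≤ f2 t := (F.Φ t y2).2.1
      have := hnot t hst' le_rfl
      linarith
    · -- frozen at 1
      have h1s : f1 s = 1 := by show (F.Φ s y1 : ℝ) = 1; rw [hfr1]; exact h1
      by_cases hτ2 : F.τ y2 ≤ ENNReal.ofReal s
      · have hft : F.Φ t y2 = F.Φ s y2 := F.frozen y2 s t hτ2 hst
        have h2t : f2 t = 1 := by
          show (F.Φ t y2 : ℝ) = 1
          rw [hft, ← hsub, hfr1]; exact h1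
        have h1t : f1 t ≤ 1 := (F.Φ t y1).2.2
        have := hnot t hst' le_rfl
        linarith
      · push_neg at hτ2
        refine absurd ?_ (keymax F y2 s hs0 hτ2 (by rw [← hsub, hfr1]; exact h1))
        rw [← hsub, hfr1]; exact hvpos
  · push_neg at hτ1
    by_cases hτ2 : F.τ y2 ≤ ENNReal.ofReal s
    · -- y2 frozen at time s
      have hne2 : F.τ y2 ≠ ⊤ := ne_top_of_le_ne_top ENNReal.ofReal_ne_top hτ2
      have hfr2 : F.Φ s y2 = F.Φ (F.τ y2).toReal y2 := frozen_toReal F y2 s hs0 hτ2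
      rcases F.maximal y2 hne2 with ⟨h0, hvneg⟩ | ⟨h1, hvpos⟩
      · refine absurd ?_ (keymin F y1 s hs0 hτ1 (by rw [hsub, hfr2]; exact h0))
        rw [hsub, hfr2]; exact hvneg
      · have hft : F.Φ t y2 = F.Φ s y2 := F.frozen y2 s t hτ2 hst
        have h2t : f2 t = 1 := by
          show (F.Φ t y2 : ℝ) = 1
          rw [hft, hfr2]; exact h1
        have h1t : f1 t ≤ 1 := (F.Φ t y1).2.2
        have := hnot t hst' le_rfl
        linarith
    · -- both trajectories run past s : use ODE uniqueness
      push_neg at hτ2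
      set c1' : ℝ := if F.τ y1 = ⊤ then t else (F.τ y1).toReal with hc1def
      set c2' : ℝ := if F.τ y2 = ⊤ then t else (F.τ y2).toReal with hc2def
      have hc1 : s < c1' := by
        rw [hc1def]
        split_ifs with h
        · exact hst'
        · by_contra hle
          push_neg at hle
          have : F.τ y1 ≤ ENNReal.ofReal s := by
            rw [← ENNReal.ofReal_toReal h]
            exact ENNReal.ofReal_le_ofReal hle
          exact absurd this (not_le.mpr hτ1)
      have hc2 : s < c2' := by
        rw [hc2def]
        split_ifs with h
        · exact hst'
        · by_contra hle
          push_neg at hle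
          have : F.τ y2 ≤ ENNReal.ofReal s := by
            rw [← ENNReal.ofReal_toReal h]
            exact ENNReal.ofReal_le_ofReal hle
          exact absurd this (not_le.mpr hτ2)
      set m : ℝ := min t (min c1' c2') with hmdef
      have hsm : s < m := lt_min hst' (lt_min hc1 hc2)
      have hmt : m ≤ t := min_le_left _ _
      have hm1 : ENNReal.ofReal m ≤ F.τ y1 := by
        rcases eq_or_ne (F.τ y1) ⊤ with h | h
        · rw [h]; exact le_top
        · have : m ≤ (F.τ y1).toReal := by
            have : m ≤ c1' := le_trans (min_le_right _ _) (min_le_left _ _)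
            rwa [hc1def, if_neg h] at this
          calc ENNReal.ofReal m ≤ ENNReal.ofReal (F.τ y1).toReal :=
                ENNReal.ofReal_le_ofReal this
            _ = F.τ y1 := ENNReal.ofReal_toReal h
      have hm2 : ENNReal.ofReal m ≤ F.τ y2 := by
        rcases eq_or_ne (F.τ y2) ⊤ with h | h
        · rw [h]; exact le_top
        · have : m ≤ (F.τ y2).toReal := by
            have : m ≤ c2' := le_trans (min_le_right _ _) (min_le_right _ _)
            rwa [hc2def, if_neg h] at this
          calc ENNReal.ofReal m ≤ ENNReal.ofReal (F.τ y2).toReal :=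
                ENNReal.ofReal_le_ofReal this
            _ = F.τ y2 := ENNReal.ofReal_toReal h
      have hm0 : 0 < m := lt_of_le_of_lt hs0 hsm
      have hderiv : ∀ (y : I01), ENNReal.ofReal m ≤ F.τ y →
          ∀ u ∈ Set.Ico s m,
            HasDerivWithinAt (fun w => (F.Φ w y : ℝ))
              (V F ((F.Φ u y : ℝ))) (Set.Ici u) u := by
        intro y hmy u hu
        have hu0 : 0 ≤ u := le_trans hs0 hu.1
        have hult : ENNReal.ofReal u < F.τ y :=
          lt_of_lt_of_le ((ENNReal.ofReal_lt_ofReal_iff hm0).mpr hu.2) hmy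
        have := F.ode y u hu0 hult
        rw [V_coe]
        exact this.hasDerivWithinAt
      have huniq : Set.EqOn f1 f2 (Set.Icc s m) := by
        refine ODE_solution_unique_of_mem_Icc_right
          (v := fun _ x => V F x) (s := fun _ => Set.univ)
          (fun _ _ => (V_lip F hv).lipschitzOnWith)
          (c1.continuousOn) (hderiv y1 hm1) (fun _ _ => trivial)
          (c2.continuousOn) (hderiv y2 hm2) (fun _ _ => trivial) heq
      have : f1 m = f2 m := huniq ⟨hsm.le, le_refl m⟩
      have := hnot m hsm hmt
      linarith

lemma hit0 (F : StoppedFlow) {t : ℝ} (ht : 0 ≤ t) {y : I01}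
    (h0 : (F.Φ t y : ℝ) = 0) (hvneg : F.v (F.Φ t y) < 0) :
    F.τ y ≤ ENNReal.ofReal t ∧ (F.Φ (F.τ y).toReal y : ℝ) = 0 := by
  have hle : F.τ y ≤ ENNReal.ofReal t := by
    by_contra h
    push_neg at h
    exact keymin F y t ht h h0 hvneg
  have hfr : F.Φ t y = F.Φ (F.τ y).toReal y := frozen_toReal F y t ht hle
  exact ⟨hle, by rw [← hfr]; exact h0⟩

lemma hit1 (F : StoppedFlow) {t : ℝ} (ht : 0 ≤ t) {y : I01}
    (h1 : (F.Φ t y : ℝ) = 1) (hvpos : 0 < F.v (F.Φ t y)) :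
    F.τ y ≤ ENNReal.ofReal t ∧ (F.Φ (F.τ y).toReal y : ℝ) = 1 := by
  have hle : F.τ y ≤ ENNReal.ofReal t := by
    by_contra h
    push_neg at h
    exact keymax F y t ht h h1 hvpos
  have hfr : F.Φ t y = F.Φ (F.τ y).toReal y := frozen_toReal F y t ht hle
  exact ⟨hle, by rw [← hfr]; exact h1⟩

end StoppedFlowAux

/-- For `z ∈ {0,1}`, the set `Ω_z^T` of initial points whose stopped trajectory reaches
the boundary point `z` strictly before time `T` is a connected subset of `[0,1]`, and
`Ω_0^T`, `Ω_1^T` are disjoint. -/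
theorem hitting_sets_connected_disjoint (F : StoppedFlow) (K : ℝ≥0)
    (hv : LipschitzWith K F.v) (T : ℝ) (hT : 0 < T) :
    IsPreconnected {y : I01 | F.τ y < ENNReal.ofReal T ∧ (F.Φ (F.τ y).toReal y : ℝ) = 0} ∧
    IsPreconnected {y : I01 | F.τ y < ENNReal.ofReal T ∧ (F.Φ (F.τ y).toReal y : ℝ) = 1} ∧
    Disjoint {y : I01 | F.τ y < ENNReal.ofReal T ∧ (F.Φ (F.τ y).toReal y : ℝ) = 0}
      {y : I01 | F.τ y < ENNReal.ofReal T ∧ (F.Φ (F.τ y).toReal y : ℝ) = 1} := by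
  open StoppedFlowAux in
  have main : ∀ (z : ℝ), (z = 0 ∨ z = 1) →
      IsPreconnected {y : I01 | F.τ y < ENNReal.ofReal T ∧ (F.Φ (F.τ y).toReal y : ℝ) = z} := by
    intro z hz
    rw [← Topology.IsInducing.subtypeVal.isPreconnected_image]
    apply Set.OrdConnected.isPreconnected
    refine ⟨fun x1 hx1 x2 hx2 x hx => ?_⟩
    obtain ⟨y1, h1, rfl⟩ := hx1
    obtain ⟨y2, h2, rfl⟩ := hx2
    have hxmem : x ∈ Set.Icc (0:ℝ) 1 :=
      ⟨le_trans y1.2.1 hx.1, le_trans hx.2 y2.2.2⟩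
    refine ⟨⟨x, hxmem⟩, ?_, rfl⟩
    set y : I01 := ⟨x, hxmem⟩ with hydef
    have hyl : y1 ≤ y := Subtype.coe_le_coe.mp hx.1
    have hyr : y ≤ y2 := Subtype.coe_le_coe.mp hx.2
    simp only [Set.mem_setOf_eq] at h1 h2 ⊢
    have hne1 : F.τ y1 ≠ ⊤ := h1.1.ne_top
    have hne2 : F.τ y2 ≠ ⊤ := h2.1.ne_top
    set t : ℝ := max (F.τ y1).toReal (F.τ y2).toReal with htdef
    have ht0 : 0 ≤ t := le_max_of_le_left ENNReal.toReal_nonneg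
    have h1t : F.τ y1 ≤ ENNReal.ofReal t := by
      rw [← ENNReal.ofReal_toReal hne1]
      exact ENNReal.ofReal_le_ofReal (le_max_left _ _)
    have h2t : F.τ y2 ≤ ENNReal.ofReal t := by
      rw [← ENNReal.ofReal_toReal hne2]
      exact ENNReal.ofReal_le_ofReal (le_max_right _ _)
    have hΦ1 : (F.Φ t y1 : ℝ) = z := by
      rw [frozen_toReal F y1 t ht0 h1t]; exact h1.2
    have hΦ2 : (F.Φ t y2 : ℝ) = z := by
      rw [frozen_toReal F y2 t ht0 h2t]; exact h2.2
    have hmono1 : (F.Φ t y1 : ℝ) ≤ (F.Φ t y : ℝ) := flow_mono F hv ht0 hyl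
    have hmono2 : (F.Φ t y : ℝ) ≤ (F.Φ t y2 : ℝ) := flow_mono F hv ht0 hyr
    have hΦy : (F.Φ t y : ℝ) = z := le_antisymm (hΦ2 ▸ hmono2) (hΦ1 ▸ hmono1)
    have hpt : F.Φ t y = F.Φ (F.τ y1).toReal y1 := Subtype.ext (by rw [hΦy, h1.2])
    have htT : t < T := by
      refine max_lt ?_ ?_
      · exact (ENNReal.lt_ofReal_iff_toReal_lt hne1).mp h1.1
      · exact (ENNReal.lt_ofReal_iff_toReal_lt hne2).mp h2.1
    have hofT : ENNReal.ofReal t < ENNReal.ofReal T :=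
      (ENNReal.ofReal_lt_ofReal_iff hT).mpr htT
    rcases hz with rfl | rfl
    · -- z = 0
      have hvneg : F.v (F.Φ t y) < 0 := by
        rcases F.maximal y1 hne1 with ⟨_, hv0⟩ | ⟨hb, _⟩
        · rw [hpt]; exact hv0
        · rw [h1.2] at hb; norm_num at hb
      obtain ⟨hle, heq⟩ := hit0 F ht0 hΦy hvneg
      exact ⟨lt_of_le_of_lt hle hofT, heq⟩
    · -- z = 1
      have hvpos : 0 < F.v (F.Φ t y) := by
        rcases F.maximal y1 hne1 with ⟨hb, _⟩ | ⟨_, hv1⟩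
        · rw [h1.2] at hb; norm_num at hb
        · rw [hpt]; exact hv1
      obtain ⟨hle, heq⟩ := hit1 F ht0 hΦy hvpos
      exact ⟨lt_of_le_of_lt hle hofT, heq⟩
  refine ⟨main 0 (Or.inl rfl), main 1 (Or.inr rfl), ?_⟩
  rw [Set.disjoint_left]
  rintro y ⟨_, h0⟩ ⟨_, h1⟩
  rw [h0] at h1
  norm_num at h1

end
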